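/- arXiv:2211.08395 — 5 statements merged into one kernel-verified Lean document; each statement's English description precedes it below -/
import Mathlib

section
/- Let P, Q, R, y₀, y₁, y₂, s₀, s₁, s₂ ∈ ℂ satisfy y₀ + y₁ + y₂ = -P/2, y₀y₁ + y₀y₂ + y₁y₂ = (P² - 4R)/16, s₀² = y₀, s₁² = y₁, s₂² = y₂, and 8·s₀·s₁·s₂ = -Q. Then u = s₀ + s₁ + s₂ is a root of the depressed quartic: u⁴ + P·u² + Q·u + R = 0. -/
theorem depressed_quartic_root (P Q R y₀ y₁ y₂ s₀ s₁ s₂ : ℂ)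
    (he1 : y₀ + y₁ + y₂ = -P/2)
    (he2 : y₀*y₁ + y₀*y₂ + y₁*y₂ = (P^2 - 4*R)/16)
    (hs0 : s₀^2 = y₀) (hs1 : s₁^2 = y₁) (hs2 : s₂^2 = y₂)
    (hprod : 8*s₀*s₁*s₂ = -Q) :
    (s₀+s₁+s₂)^4 + P*(s₀+s₁+s₂)^2 + Q*(s₀+s₁+s₂) + R = 0 := by
  subst hs0 hs1 hs2
  linear_combination (s₀^2+s₁^2+s₂^2 + P/2 + 4*(s₀*s₁+s₀*s₂+s₁*s₂)) * he1 + 4*he2 + (s₀+s₁+s₂)*hprod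
end

section
/- Let a, b, c, d, e ∈ ℂ with a ≠ 0. Define P = -6(b/a)² + 16c/a, Q = 8(b/a)³ - 32cb/a² + 64d/a, and R = -3(b/a)⁴ + 16cb²/a³ - 64db/a² + 256e/a. Let y₀, y₁, y₂, s₀, s₁, s₂ ∈ ℂ satisfy y₀ + y₁ + y₂ = -P/2, y₀y₁ + y₀y₂ + y₁y₂ = (P² - 4R)/16, s₀² = y₀, s₁² = y₁, s₂² = y₂, and 8·s₀·s₁·s₂ = -Q. Then x = (-(b/a) + s₀ + s₁ + s₂)/4 satisfies a·x⁴ + b·x³ + c·x² + d·x + e = 0. -/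
private lemma quartic_aux (B C D E P Q R u : ℂ)
    (hP : P = -6*B^2 + 16*C) (hQ : Q = 8*B^3 - 32*C*B + 64*D)
    (hR : R = -3*B^4 + 16*C*B^2 - 64*D*B + 256*E)
    (hkey : u^4 + P*u^2 + Q*u + R = 0) :
    ((-B + u)/4)^4 + B*((-B + u)/4)^3 + C*((-B + u)/4)^2 + D*((-B + u)/4) + E = 0 := by
  subst hP hQ hR
  linear_combination (1/256) * hkey

theorem general_quartic_root_plus (a b c d e : ℂ) (ha : a ≠ 0) (P Q R : ℂ)
    (hP : P = -6*(b/a)^2 + 16*c/a)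
    (hQ : Q = 8*(b/a)^3 - 32*c*b/a^2 + 64*d/a)
    (hR : R = -3*(b/a)^4 + 16*c*b^2/a^3 - 64*d*b/a^2 + 256*e/a)
    (y₀ y₁ y₂ s₀ s₁ s₂ : ℂ)
    (he1 : y₀ + y₁ + y₂ = -P/2)
    (he2 : y₀*y₁ + y₀*y₂ + y₁*y₂ = (P^2 - 4*R)/16)
    (hs0 : s₀^2 = y₀) (hs1 : s₁^2 = y₁) (hs2 : s₂^2 = y₂)
    (hprod : 8*s₀*s₁*s₂ = -Q) :
    a*((-(b/a) + s₀ + s₁ + s₂)/4)^4 + b*((-(b/a) + s₀ + s₁ + s₂)/4)^3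
      + c*((-(b/a) + s₀ + s₁ + s₂)/4)^2 + d*((-(b/a) + s₀ + s₁ + s₂)/4) + e = 0 := by
  subst hs0 hs1 hs2
  set u := s₀ + s₁ + s₂ with hu
  have key : u^4 + P*u^2 + Q*u + R = 0 := by
    linear_combination (s₀^2 + s₁^2 + s₂^2 + P/2 + 4*(s₀*s₁ + s₀*s₂ + s₁*s₂)) * he1 +
      4 * he2 + u * hprod
  have hP' : P = -6*(b/a)^2 + 16*(c/a) := by rw [hP]; ring
  have hQ' : Q = 8*(b/a)^3 - 32*(c/a)*(b/a) + 64*(d/a) := by rw [hQ]; ring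
  have hR' : R = -3*(b/a)^4 + 16*(c/a)*(b/a)^2 - 64*(d/a)*(b/a) + 256*(e/a) := by
    rw [hR]; ring
  have final := quartic_aux (b/a) (c/a) (d/a) (e/a) P Q R u hP' hQ' hR' key
  have hb : a*(b/a) = b := mul_div_cancel₀ b ha
  have hc : a*(c/a) = c := mul_div_cancel₀ c ha
  have hd : a*(d/a) = d := mul_div_cancel₀ d ha
  have he' : a*(e/a) = e := mul_div_cancel₀ e ha
  linear_combination a * final - ((-(b/a) + s₀ + s₁ + s₂)/4)^3 * hb -
    ((-(b/a) + s₀ + s₁ + s₂)/4)^2 * hc - ((-(b/a) + s₀ + s₁ + s₂)/4) * hd - he'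
end

section
/- Let a, b, c, d, e ∈ ℂ with a ≠ 0. Define P = -6(b/a)² + 16c/a, Q = 8(b/a)³ - 32cb/a² + 64d/a, and R = -3(b/a)⁴ + 16cb²/a³ - 64db/a² + 256e/a. Let y₀, y₁, y₂, s₀, s₁, s₂ ∈ ℂ satisfy y₀ + y₁ + y₂ = -P/2, y₀y₁ + y₀y₂ + y₁y₂ = (P² - 4R)/16, s₀² = y₀, s₁² = y₁, s₂² = y₂, and 8·s₀·s₁·s₂ = Q. Then x = (-(b/a) - s₀ - s₁ - s₂)/4 satisfies a·x⁴ + b·x³ + c·x² + d·x + e = 0. -/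
theorem general_quartic_root_minus (a b c d e : ℂ) (ha : a ≠ 0) (P Q R : ℂ)
    (hP : P = -6*(b/a)^2 + 16*c/a)
    (hQ : Q = 8*(b/a)^3 - 32*c*b/a^2 + 64*d/a)
    (hR : R = -3*(b/a)^4 + 16*c*b^2/a^3 - 64*d*b/a^2 + 256*e/a)
    (y₀ y₁ y₂ s₀ s₁ s₂ : ℂ)
    (he1 : y₀ + y₁ + y₂ = -P/2)
    (he2 : y₀*y₁ + y₀*y₂ + y₁*y₂ = (P^2 - 4*R)/16)
    (hs0 : s₀^2 = y₀) (hs1 : s₁^2 = y₁) (hs2 : s₂^2 = y₂)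
    (hprod : 8*s₀*s₁*s₂ = Q) :
    a*((-(b/a) - s₀ - s₁ - s₂)/4)^4 + b*((-(b/a) - s₀ - s₁ - s₂)/4)^3
      + c*((-(b/a) - s₀ - s₁ - s₂)/4)^2 + d*((-(b/a) - s₀ - s₁ - s₂)/4) + e = 0 := by
  subst hs0 hs1 hs2
  have hkey : (s₀+s₁+s₂)^4 + P*(s₀+s₁+s₂)^2 - Q*(s₀+s₁+s₂) + R = 0 := by
    linear_combination (2*(s₀+s₁+s₂)^2 + P/2 - (s₀^2+s₁^2+s₂^2))*he1 + (s₀+s₁+s₂)*hprod + 4*he2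
  obtain ⟨u, rfl⟩ : ∃ u, b = a*u := ⟨b/a, by field_simp⟩
  obtain ⟨c', rfl⟩ : ∃ c', c = a*c' := ⟨c/a, by field_simp⟩
  obtain ⟨d', rfl⟩ : ∃ d', d = a*d' := ⟨d/a, by field_simp⟩
  obtain ⟨e', rfl⟩ : ∃ e', e = a*e' := ⟨e/a, by field_simp⟩
  field_simp at hP hQ hR
  rw [show a*u/a = u by field_simp]
  have hP' : P = -6*u^2 + 16*c' := by
    apply mul_right_cancel₀ ha; linear_combination a*hP
  have hQ' : Q = 8*u^3 - 32*c'*u + 64*d' := by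
    apply mul_right_cancel₀ (pow_ne_zero 3 ha); linear_combination a^3*hQ
  have hR' : R = -3*u^4 + 16*c'*u^2 - 64*d'*u + 256*e' := by
    apply mul_right_cancel₀ (pow_ne_zero 6 ha); linear_combination a^6*hR
  subst hP' hQ' hR'
  linear_combination (a/256)*hkey
end

section
/- Let a, b, c, d, e ∈ ℂ with a ≠ 0. Define P = -6(b/a)² + 16c/a, Q = 8(b/a)³ - 32cb/a² + 64d/a, and R = -3(b/a)⁴ + 16cb²/a³ - 64db/a² + 256e/a. Let y₀, y₁, y₂, s₀, s₁, s₂ ∈ ℂ satisfy y₀ + y₁ + y₂ = -P/2, y₀y₁ + y₀y₂ + y₁y₂ = (P² - 4R)/16, s₀² = y₀, s₁² = y₁, s₂² = y₂, and 8·s₀·s₁·s₂ = -Q. Then for all x ∈ ℂ, a·x⁴ + b·x³ + c·x² + d·x + e = a·(x - X₁)·(x - X₂)·(x - X₃)·(x - X₄), where X₁ = (-(b/a) + s₀ + s₁ + s₂)/4, X₂ = (-(b/a) - s₀ - s₁ + s₂)/4, X₃ = (-(b/a) - s₀ + s₁ - s₂)/4, and X₄ = (-(b/a) + s₀ - s₁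 - s₂)/4. -/
theorem general_quartic_factorization (a b c d e : ℂ) (ha : a ≠ 0) (P Q R : ℂ)
    (hP : P = -6*(b/a)^2 + 16*c/a)
    (hQ : Q = 8*(b/a)^3 - 32*c*b/a^2 + 64*d/a)
    (hR : R = -3*(b/a)^4 + 16*c*b^2/a^3 - 64*d*b/a^2 + 256*e/a)
    (y₀ y₁ y₂ s₀ s₁ s₂ : ℂ)
    (he1 : y₀ + y₁ + y₂ = -P/2)
    (he2 : y₀*y₁ + y₀*y₂ + y₁*y₂ = (P^2 - 4*R)/16)
    (hs0 : s₀^2 = y₀) (hs1 : s₁^2 = y₁) (hs2 : s₂^2 = y₂)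
    (hprod : 8*s₀*s₁*s₂ = -Q) :
    ∀ x : ℂ,
      a*x^4 + b*x^3 + c*x^2 + d*x + e
        = a*(x - (-(b/a) + s₀ + s₁ + s₂)/4)*(x - (-(b/a) - s₀ - s₁ + s₂)/4)
            *(x - (-(b/a) - s₀ + s₁ - s₂)/4)*(x - (-(b/a) + s₀ - s₁ - s₂)/4) := by
  intro x
  subst hs0 hs1 hs2
  have hP' : P*a^2 = 16*c*a - 6*b^2 := by rw [hP]; field_simp; ring
  have hQ' : Q*a^3 = 8*b^3 - 32*c*b*a + 64*d*a^2 := by rw [hQ]; field_simp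
  have hR' : R*a^4 = -3*b^4 + 16*c*b^2*a - 64*d*b*a^2 + 256*e*a^3 := by
    have h := hR
    field_simp at h
    linear_combination h
  set w : ℂ := 4*a*x + b with hw
  have key : 256*a^3*(a*x^4 + b*x^3 + c*x^2 + d*x + e)
      = (w - a*(s₀+s₁+s₂))*(w - a*(-s₀-s₁+s₂))*(w - a*(-s₀+s₁-s₂))*(w - a*(s₀-s₁-s₂)) := by
    linear_combination (-(w^2))*hP' + (-w)*hQ' + (-1)*hR'
      + (2*a^2*w^2 + a^4*(P/2 - (s₀^2+s₁^2+s₂^2)))*he1 + (a^3*w)*hprod + (4*a^4)*he2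
  have h256 : (256:ℂ)*a^3 ≠ 0 := mul_ne_zero (by norm_num) (pow_ne_zero _ ha)
  set t : ℂ := b/a with ht
  have hb : b = a*t := by rw [ht]; field_simp
  apply mul_left_cancel₀ h256
  rw [key, hw, hb]
  ring
end

section
/- Let a, b, c, d, e ∈ ℂ with a ≠ 0. Define P = -6(b/a)² + 16c/a, Q = 8(b/a)³ - 32cb/a² + 64d/a, and R = -3(b/a)⁴ + 16cb²/a³ - 64db/a² + 256e/a, and suppose Q = 0. Let y₀, s, t ∈ ℂ satisfy y₀² + (P/2)·y₀ + (P² - 4R)/16 = 0, s² = y₀, and t² = -(P/2 + y₀). Then for all x ∈ ℂ, a·x⁴ + b·x³ + c·x² + d·x + e = a·(x - X₁)·(x - X₂)·(x - X₃)·(x - X₄), where X₁ = (-(b/a) + s + t)/4, X₂ = (-(b/a) - s - t)/4, X₃ = (-(b/a) - s + t)/4, and X₄ = (-(b/a) + s - t)/4. -/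
theorem general_quartic_factorization_Q_zero (a b c d e : ℂ) (ha : a ≠ 0) (P Q R : ℂ)
    (hP : P = -6*(b/a)^2 + 16*c/a)
    (hQ : Q = 8*(b/a)^3 - 32*c*b/a^2 + 64*d/a)
    (hR : R = -3*(b/a)^4 + 16*c*b^2/a^3 - 64*d*b/a^2 + 256*e/a)
    (hQ0 : Q = 0)
    (y₀ s t : ℂ)
    (hy₀ : y₀^2 + (P/2)*y₀ + (P^2 - 4*R)/16 = 0)
    (hs : s^2 = y₀) (ht : t^2 = -(P/2 + y₀)) :
    ∀ x : ℂ,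
      a*x^4 + b*x^3 + c*x^2 + d*x + e
        = a*(x - (-(b/a) + s + t)/4)*(x - (-(b/a) - s - t)/4)
            *(x - (-(b/a) - s + t)/4)*(x - (-(b/a) + s - t)/4) := by
  obtain ⟨B, rfl⟩ : ∃ B, b = a*B := ⟨b/a, (mul_div_cancel₀ b ha).symm⟩
  obtain ⟨C, rfl⟩ : ∃ C, c = a*C := ⟨c/a, (mul_div_cancel₀ c ha).symm⟩
  obtain ⟨D, rfl⟩ : ∃ D, d = a*D := ⟨d/a, (mul_div_cancel₀ d ha).symm⟩
  obtain ⟨E, rfl⟩ : ∃ E, e = a*E := ⟨e/a, (mul_div_cancel₀ e ha).symm⟩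
  have hP2 : P = -6*B^2 + 16*C := by
    refine mul_left_cancel₀ (pow_ne_zero 2 ha) ?_
    rw [hP]; field_simp
  have hQ2 : Q = 8*B^3 - 32*C*B + 64*D := by
    refine mul_left_cancel₀ (pow_ne_zero 3 ha) ?_
    rw [hQ]; field_simp
  have hR2 : R = -3*B^4 + 16*C*B^2 - 64*D*B + 256*E := by
    refine mul_left_cancel₀ (pow_ne_zero 4 ha) ?_
    rw [hR]; field_simp
  intro x
  simp only [mul_div_cancel_left₀ _ ha]
  linear_combination a*( (x + B/4)^2/16*(-hP2 + 2*hs + 2*ht)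
    + (x + B/4)/64*(hQ0 - hQ2)
    + (1/256)*(-hR2 - 4*hy₀ + (2*y₀ + P/2 + s^2 - t^2)*(ht - hs)) )
end
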